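/- For integers m >= 1 and 1 <= n <= m-1 (with m-1 >= n), the polynomial B(m,n;q) = [2m]![n]!/([m]![m-n]![2n]!) satisfies the three-term recursion B(m,n;q) = q^{2m-2n} B(m-1,n-1;q) + (1 + q^m + q^{m-n} + q^{2m+n-1}) B(m-1,n;q). -/
import Mathlib

open Finset

/-- The `q`-factorial `[n]! = [1][2]⋯[n]`, as a rational function in `q`. -/
noncomputable def qFact (n : ℕ) : RatFunc ℚ :=
  ∏ i ∈ range n, ∑ j ∈ range (i + 1), RatFunc.X ^ j

/-- `B(m,n;q) = [2m]![n]!/([m]![m-n]![2n]!)`. -/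
noncomputable def Bq (m n : ℕ) : RatFunc ℚ :=
  qFact (2 * m) * qFact n / (qFact m * qFact (m - n) * qFact (2 * n))

noncomputable def Sq (k : ℕ) : RatFunc ℚ := ∑ j ∈ range k, RatFunc.X ^ j

lemma Sq_ne_zero (k : ℕ) : Sq (k + 1) ≠ 0 := by
  have : Sq (k+1) = algebraMap (Polynomial ℚ) (RatFunc ℚ) (∑ j ∈ range (k+1), Polynomial.X ^ j) := by
    simp [Sq, map_sum, map_pow, RatFunc.algebraMap_X]
  rw [this]
  apply RatFunc.algebraMap_ne_zero
  intro h
  have := congrArg (fun p => Polynomial.coeff p 0) h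
  simp [Polynomial.finset_sum_coeff, Polynomial.coeff_X_pow] at this

lemma X_sub_one_ne : (RatFunc.X : RatFunc ℚ) - 1 ≠ 0 := by
  rw [sub_ne_zero]
  intro h
  rw [show (RatFunc.X : RatFunc ℚ) = algebraMap (Polynomial ℚ) _ Polynomial.X from (RatFunc.algebraMap_X).symm,
    show (1 : RatFunc ℚ) = algebraMap (Polynomial ℚ) _ 1 from (map_one _).symm] at h
  have h2 := congrArg (fun p => Polynomial.coeff p 1) (RatFunc.algebraMap_injective ℚ h)
  simp [Polynomial.coeff_one] at h2

lemma Sq_eq (k : ℕ) : Sq k = (RatFunc.X ^ k - 1) / (RatFunc.X - 1) := by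
  rw [eq_div_iff X_sub_one_ne]
  exact geom_sum_mul _ _

lemma qFact_succ (n : ℕ) : qFact (n + 1) = qFact n * Sq (n + 1) := by
  rw [qFact, qFact, Sq, Finset.prod_range_succ]

lemma qFact_ne_zero (n : ℕ) : qFact n ≠ 0 := by
  rw [qFact]
  exact Finset.prod_ne_zero_iff.mpr fun i _ => Sq_ne_zero i

lemma Sq_key (b c : ℕ) :
    Sq (2 * (b + c + 1) + 1) * Sq (2 * (b + c + 1) + 1 + 1) * Sq (b + 1) =
      RatFunc.X ^ (2 * c + 2) * (Sq (b + c + 1 + 1) * Sq (2 * b + 1) * Sq (2 * b + 1 + 1)) +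
      (1 + RatFunc.X ^ (b + c + 1 + 1) + RatFunc.X ^ (c + 1) + RatFunc.X ^ (3 * b + 2 * c + 4)) *
        (Sq (b + 1) * Sq (b + c + 1 + 1) * Sq (c + 1)) := by
  simp only [Sq_eq]
  field_simp
  ring

set_option maxHeartbeats 4000000 in
theorem Bq_three_term_recursion (m n : ℕ) (hn : 1 ≤ n) (hmn : n ≤ m - 1) (hm : 1 ≤ m) :
    Bq m n = RatFunc.X ^ (2 * m - 2 * n) * Bq (m - 1) (n - 1) +
      (1 + RatFunc.X ^ m + RatFunc.X ^ (m - n) + RatFunc.X ^ (2 * m + n - 1)) *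
        Bq (m - 1) n := by
  obtain ⟨b, c, rfl, rfl⟩ : ∃ b c, n = b + 1 ∧ m = b + c + 2 :=
    ⟨n - 1, m - n - 1, by omega, by omega⟩
  rw [show 2 * (b + c + 2) - 2 * (b + 1) = 2 * c + 2 from by omega,
    show 2 * (b + c + 2) + (b + 1) - 1 = 3 * b + 2 * c + 4 from by omega,
    show (b + c + 2) - 1 = b + c + 1 from by omega,
    show (b + 1) - 1 = b from by omega,
    show b + c + 2 = b + c + 1 + 1 from by omega]
  rw [Bq, Bq, Bq,
    show (b + c + 1 + 1) - (b + 1) = c + 1 from by omega,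
    show (b + c + 1) - b = c + 1 from by omega,
    show (b + c + 1) - (b + 1) = c from by omega]
  rw [show 2 * (b + c + 1 + 1) = 2 * (b + c + 1) + 1 + 1 from by ring,
    show 2 * (b + 1) = 2 * b + 1 + 1 from by ring]
  rw [qFact_succ (2 * (b + c + 1) + 1), qFact_succ (2 * (b + c + 1)),
    qFact_succ (2 * b + 1), qFact_succ (2 * b),
    qFact_succ (b + c + 1), qFact_succ b, qFact_succ c]
  have hF1 := qFact_ne_zero (b + c + 1)
  have hF2 := qFact_ne_zero c
  have hF3 := qFact_ne_zero (2 * b)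
  have hS1 := Sq_ne_zero (b + c + 1)
  have hS2 := Sq_ne_zero c
  have hS3 := Sq_ne_zero (2 * b)
  have hS4 := Sq_ne_zero (2 * b + 1)
  have hd1 : qFact (b + c + 1) * Sq (b + c + 1 + 1) * (qFact c * Sq (c + 1)) *
      (qFact (2 * b) * Sq (2 * b + 1) * Sq (2 * b + 1 + 1)) ≠ 0 := by
    refine mul_ne_zero (mul_ne_zero (mul_ne_zero hF1 hS1) (mul_ne_zero hF2 hS2)) ?_
    exact mul_ne_zero (mul_ne_zero hF3 hS3) hS4
  have hd2 : qFact (b + c + 1) * (qFact c * Sq (c + 1)) * qFact (2 * b) ≠ 0 :=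
    mul_ne_zero (mul_ne_zero hF1 (mul_ne_zero hF2 hS2)) hF3
  have hd3 : qFact (b + c + 1) * qFact c *
      (qFact (2 * b) * Sq (2 * b + 1) * Sq (2 * b + 1 + 1)) ≠ 0 :=
    mul_ne_zero (mul_ne_zero hF1 hF2) (mul_ne_zero (mul_ne_zero hF3 hS3) hS4)
  field_simp [hF1, hF2, hF3, hS1, hS2, hS3, hS4]
  simp only [Sq_eq]
  field_simp
  ring
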